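/- Let (H, A, C)_R be a left-left Doi-Koppinen datum over R and 𝒞 = C ⊗_R A the associated A-coring. Then the category of left 𝒞-comodules is isomorphic to the category of left-left Doi-Koppinen modules over R associated to (H, A, C)_R, i.e. left A-modules M with a left C-comodule (over the R-coring C) structure ρ_M satisfying ρ_M(a·m) = a_{<-1>}·m_{<-1>} ⊗_R a_{<0>}·m_{<0>}. -/
import Mathlib

open TensorProduct LinearMap MulOpposite

noncomputable section
namespace BGD

variable (k : Type*) [CommRing k] (R H : Type*) [Ring R] [Ring H]
  [Algebra k R] [Algebra k H]
  (sH : R →ₐ[k] H) (tH : Rᵐᵒᵖ →ₐ[k] H)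
  (ΔH : H →ₗ[k] H ⊗[k] H) (εH : H →ₗ[k] R)

/-- Balancing relations for `H ⊗_R H` (bimodule structure `r · h · r' = s_H(r) t_H(r') h`). -/
def rel : Submodule k (H ⊗[k] H) :=
  Submodule.span k {x | ∃ (r : R) (a b : H),
    x = (tH (op r) * a) ⊗ₜ[k] b - a ⊗ₜ[k] (sH r * b)}

/-- Balancing relations for `H ⊗_R H ⊗_R H`, written in `H ⊗ (H ⊗ H)`. -/
def rel3 : Submodule k (H ⊗[k] (H ⊗[k] H)) :=
  Submodule.span k
    ({x | ∃ (r : R) (a : H) (y : H ⊗[k] H),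
        x = (tH (op r) * a) ⊗ₜ[k] y -
          a ⊗ₜ[k] ((LinearMap.rTensor H (LinearMap.mulLeft k (sH r))) y)} ∪
     {x | ∃ (r : R) (a b c : H),
        x = a ⊗ₜ[k] ((tH (op r) * b) ⊗ₜ[k] c) - a ⊗ₜ[k] (b ⊗ₜ[k] (sH r * c))})

/-- `(a ⊗ b) ↦ s_H(ε_H a) * b`. -/
def cl : H ⊗[k] H →ₗ[k] H :=
  LinearMap.mul' k H ∘ₗ TensorProduct.map (sH.toLinearMap ∘ₗ εH) LinearMap.id

/-- `(a ⊗ b) ↦ t_H(ε_H b) * a`. -/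
def cr : H ⊗[k] H →ₗ[k] H :=
  LinearMap.mul' k H ∘ₗ
    TensorProduct.map (tH.toLinearMap ∘ₗ (opLinearEquiv k).toLinearMap ∘ₗ εH) LinearMap.id ∘ₗ
    (TensorProduct.comm k H H).toLinearMap

/-- The `R`-bialgebroid axioms for `(H, s_H, t_H, Δ_H, ε_H)`, with the coproduct given by a
`k`-linear lift `Δ_H : H → H ⊗_k H` of the coproduct `H → H ⊗_R H` (all conditions
involving `H ⊗_R H` are stated modulo the balancing relations). -/
def IsBialgebroid : Prop :=
  (∀ r r' : R, sH r * tH (op r') = tH (op r') * sH r) ∧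
  -- `(H, Δ, ε)` is an `R`-coring:
  (∀ h : H, cl k R H sH εH (ΔH h) = h) ∧
  (∀ h : H, cr k R H tH εH (ΔH h) = h) ∧
  (∀ h : H, (rel3 k R H sH tH).mkQ
      ((TensorProduct.assoc k H H H) ((LinearMap.rTensor H ΔH) (ΔH h))) =
    (rel3 k R H sH tH).mkQ ((LinearMap.lTensor H ΔH) (ΔH h))) ∧
  (∀ (r : R) (h : H), εH (sH r * h) = r * εH h) ∧
  (∀ (r : R) (h : H), εH (tH (op r) * h) = εH h * r) ∧
  (∀ (r : R) (h : H), (rel k R H sH tH).mkQ (ΔH (sH r * h)) =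
    (rel k R H sH tH).mkQ ((LinearMap.rTensor H (LinearMap.mulLeft k (sH r))) (ΔH h))) ∧
  (∀ (r : R) (h : H), (rel k R H sH tH).mkQ (ΔH (tH (op r) * h)) =
    (rel k R H sH tH).mkQ
      ((LinearMap.lTensor H (LinearMap.mulLeft k (tH (op r)))) (ΔH h))) ∧
  -- the image of `Δ` lies in the Takeuchi product `H ×_R H`:
  (∀ (r : R) (h : H),
    (rel k R H sH tH).mkQ ((LinearMap.rTensor H (LinearMap.mulRight k (tH (op r)))) (ΔH h)) =
      (rel k R H sH tH).mkQ ((LinearMap.lTensor H (LinearMap.mulRight k (sH r))) (ΔH h))) ∧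
  -- the corestriction of `Δ` is an algebra map:
  (∀ g h : H, (rel k R H sH tH).mkQ (ΔH (g * h)) = (rel k R H sH tH).mkQ (ΔH g * ΔH h)) ∧
  ((rel k R H sH tH).mkQ (ΔH 1) = (rel k R H sH tH).mkQ ((1 : H) ⊗ₜ[k] (1 : H))) ∧
  -- counit conditions:
  (εH 1 = 1) ∧
  (∀ g h : H, εH (g * h) = εH (g * sH (εH h))) ∧
  (∀ g h : H, εH (g * h) = εH (g * tH (op (εH h))))

section ModuleCoalgebra

variable (C : Type*) [AddCommGroup C] [Module k C]
  (act : H →ₗ[k] C →ₗ[k] C) (ΔC : C →ₗ[k] C ⊗[k] C) (εC : C →ₗ[k] R)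

/-- Evaluation `H ⊗ C → C` of the action. -/
def evC : H ⊗[k] C →ₗ[k] C := TensorProduct.lift act

/-- Balancing relations for `C ⊗_R C`, where `C` is an `R`-bimodule via
`r · c · r' = (s_H r · t_H r') · c`. -/
def relC : Submodule k (C ⊗[k] C) :=
  Submodule.span k {x | ∃ (r : R) (c c' : C),
    x = (act (tH (op r)) c) ⊗ₜ[k] c' - c ⊗ₜ[k] (act (sH r) c')}

/-- Balancing relations for `C ⊗_R C ⊗_R C` inside `C ⊗ (C ⊗ C)`. -/
def relC3 : Submodule k (C ⊗[k] (C ⊗[k] C)) :=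
  Submodule.span k
    ({x | ∃ (r : R) (c : C) (y : C ⊗[k] C),
        x = (act (tH (op r)) c) ⊗ₜ[k] y -
          c ⊗ₜ[k] ((LinearMap.rTensor C (act (sH r))) y)} ∪
     {x | ∃ (r : R) (c c' c'' : C),
        x = c ⊗ₜ[k] ((act (tH (op r)) c') ⊗ₜ[k] c'') -
          c ⊗ₜ[k] (c' ⊗ₜ[k] (act (sH r) c''))})

/-- The diagonal action of `H ⊗ H` on `C ⊗ C`: `(g ⊗ g') ⊗ (c ⊗ c') ↦ g·c ⊗ g'·c'`. -/
def Psi2 : (H ⊗[k] H) ⊗[k] (C ⊗[k] C) →ₗ[k] C ⊗[k] C :=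
  TensorProduct.map (evC k H C act) (evC k H C act) ∘ₗ
    (TensorProduct.tensorTensorTensorComm k H H C C).toLinearMap

/-- `(c ⊗ c') ↦ s_H(ε_C c) · c'`. -/
def clC : C ⊗[k] C →ₗ[k] C :=
  evC k H C act ∘ₗ TensorProduct.map (sH.toLinearMap ∘ₗ εC) LinearMap.id

/-- `(c ⊗ c') ↦ t_H(ε_C c') · c`. -/
def crC : C ⊗[k] C →ₗ[k] C :=
  evC k H C act ∘ₗ
    TensorProduct.map (tH.toLinearMap ∘ₗ (opLinearEquiv k).toLinearMap ∘ₗ εC) LinearMap.id ∘ₗ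
    (TensorProduct.comm k C C).toLinearMap

/-- `C` is a left `H`-module coalgebra for the `R`-bialgebroid `H`: a coalgebra in the
monoidal category of left `H`-modules, i.e. an `R`-coring `(C, Δ_C, ε_C)` with a left
`H`-module structure such that `Δ_C` and `ε_C` are `H`-linear. -/
def IsModuleCoalgebra : Prop :=
  (∀ (g h : H) (c : C), act (g * h) c = act g (act h c)) ∧
  (∀ c : C, act 1 c = c) ∧
  -- `R`-coring axioms:
  (∀ c : C, (relC3 k R H sH tH C act).mkQ
      ((TensorProduct.assoc k C C C) ((LinearMap.rTensor C ΔC) (ΔC c))) =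
    (relC3 k R H sH tH C act).mkQ ((LinearMap.lTensor C ΔC) (ΔC c))) ∧
  (∀ c : C, clC k R H sH C act εC (ΔC c) = c) ∧
  (∀ c : C, crC k R H tH C act εC (ΔC c) = c) ∧
  -- `Δ_C` is `H`-linear: `Δ_C(h · c) = h₍₁₎·c₍₁₎ ⊗_R h₍₂₎·c₍₂₎`:
  (∀ (h : H) (c : C), (relC k R H sH tH C act).mkQ (ΔC (act h c)) =
    (relC k R H sH tH C act).mkQ ((Psi2 k H C act) ((ΔH h) ⊗ₜ[k] (ΔC c)))) ∧
  -- `ε_C` is `H`-linear: `ε_C(h · c) = ε_H(h s_H(ε_C c))`: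
  (∀ (h : H) (c : C), εC (act h c) = εH (h * sH (εC c)))

end ModuleCoalgebra

section ComoduleAlgebra

variable (A : Type*) [Ring A] [Algebra k A] (sA : R →ₐ[k] A) (ρ : A →ₗ[k] H ⊗[k] A)

/-- Balancing relations for `H ⊗_R A`. -/
def relA : Submodule k (H ⊗[k] A) :=
  Submodule.span k {x | ∃ (r : R) (h : H) (a : A),
    x = (tH (op r) * h) ⊗ₜ[k] a - h ⊗ₜ[k] (sA r * a)}

/-- Balancing relations for `H ⊗_R H ⊗_R A` inside `H ⊗ (H ⊗ A)`. -/
def relA3 : Submodule k (H ⊗[k] (H ⊗[k] A)) :=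
  Submodule.span k
    ({x | ∃ (r : R) (h : H) (y : H ⊗[k] A),
        x = (tH (op r) * h) ⊗ₜ[k] y -
          h ⊗ₜ[k] ((LinearMap.rTensor A (LinearMap.mulLeft k (sH r))) y)} ∪
     {x | ∃ (r : R) (h h' : H) (a : A),
        x = h ⊗ₜ[k] ((tH (op r) * h') ⊗ₜ[k] a) - h ⊗ₜ[k] (h' ⊗ₜ[k] (sA r * a))})

/-- `(h ⊗ a) ↦ s_A(ε_H h) * a`. -/
def clA : H ⊗[k] A →ₗ[k] A :=
  LinearMap.mul' k A ∘ₗ TensorProduct.map (sA.toLinearMap ∘ₗ εH) LinearMap.id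

/-- `(A, s_A, ρ)` is a left `H`-comodule algebra for the `R`-bialgebroid `H`:
`(A, s_A)` is an `R`-ring, `(A, ρ)` is a left comodule of the `R`-coring `H` (with `ρ` a
`k`-linear lift of the coaction `A → H ⊗_R A`), the image of `ρ` lies in the Takeuchi
product `H ×_R A`, and the corestriction of `ρ` is an algebra map. -/
def IsComoduleAlgebra : Prop :=
  (∀ a : A, (relA3 k R H sH tH A sA).mkQ
      ((TensorProduct.assoc k H H A) ((LinearMap.rTensor A ΔH) (ρ a))) =
    (relA3 k R H sH tH A sA).mkQ ((LinearMap.lTensor H ρ) (ρ a))) ∧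
  (∀ a : A, clA k R H εH A sA (ρ a) = a) ∧
  (∀ (r : R) (a : A), (relA k R H tH A sA).mkQ (ρ (sA r * a)) =
    (relA k R H tH A sA).mkQ ((LinearMap.rTensor A (LinearMap.mulLeft k (sH r))) (ρ a))) ∧
  (∀ (r : R) (a : A),
    (relA k R H tH A sA).mkQ ((LinearMap.rTensor A (LinearMap.mulRight k (tH (op r)))) (ρ a)) =
      (relA k R H tH A sA).mkQ ((LinearMap.lTensor H (LinearMap.mulRight k (sA r))) (ρ a))) ∧
  (∀ a b : A, (relA k R H tH A sA).mkQ (ρ (a * b)) =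
    (relA k R H tH A sA).mkQ (ρ a * ρ b)) ∧
  ((relA k R H tH A sA).mkQ (ρ 1) = (relA k R H tH A sA).mkQ ((1 : H) ⊗ₜ[k] (1 : A)))

end ComoduleAlgebra

end BGD
end

open TensorProduct LinearMap MulOpposite

noncomputable section
namespace S17

variable {k : Type*} [CommRing k] {R H : Type*} [Ring R] [Ring H]
  [Algebra k R] [Algebra k H]
  (sH : R →ₐ[k] H) (tH : Rᵐᵒᵖ →ₐ[k] H)
  {C : Type*} [AddCommGroup C] [Module k C]
  (act : H →ₗ[k] C →ₗ[k] C)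
  {A : Type*} [Ring A] [Algebra k A] (sA : R →ₐ[k] A) (ρ : A →ₗ[k] H ⊗[k] A)
  {M : Type} [AddCommGroup M] [Module k M] (am : A →ₗ[k] M →ₗ[k] M)

/-- relA from the statement. -/
def relA : Submodule k (H ⊗[k] A) :=
  Submodule.span k {x | ∃ (r : R) (h : H) (a : A),
    x = (tH (op r) * h) ⊗ₜ[k] a - h ⊗ₜ[k] (sA r * a)}

def relCM : Submodule k (C ⊗[k] M) := Submodule.span k
  {x | ∃ (r : R) (c : C) (m : M),
    x = (act (tH (op r)) c) ⊗ₜ[k] m - c ⊗ₜ[k] (am (sA r) m)}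

def rel3CM : Submodule k (C ⊗[k] (C ⊗[k] M)) := Submodule.span k
  ({x | ∃ (r : R) (c : C) (y : C ⊗[k] M),
      x = (act (tH (op r)) c) ⊗ₜ[k] y -
        c ⊗ₜ[k] ((LinearMap.rTensor M (act (sH r))) y)} ∪
   {x | ∃ (r : R) (c c' : C) (m : M),
      x = c ⊗ₜ[k] ((act (tH (op r)) c') ⊗ₜ[k] m) -
        c ⊗ₜ[k] (c' ⊗ₜ[k] (am (sA r) m))})

def theta : A → (C ⊗[k] M →ₗ[k] C ⊗[k] M) := fun a =>
  (TensorProduct.map (TensorProduct.lift act) (TensorProduct.lift am) ∘ₗ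
    (TensorProduct.tensorTensorTensorComm k H A C M).toLinearMap) ∘ₗ
    TensorProduct.mk k (H ⊗[k] A) (C ⊗[k] M) (ρ a)

def lam : A → (C ⊗[k] A →ₗ[k] C ⊗[k] A) := fun a =>
  (TensorProduct.map (TensorProduct.lift act) (LinearMap.mul' k A) ∘ₗ
    (TensorProduct.tensorTensorTensorComm k H A C A).toLinearMap) ∘ₗ
    TensorProduct.mk k (H ⊗[k] A) (C ⊗[k] A) (ρ a)

def relF : Submodule k ((C ⊗[k] A) ⊗[k] M) := Submodule.span k
  ({x | ∃ (r : R) (c : C) (a : A) (m : M),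
      x = ((act (tH (op r)) c) ⊗ₜ[k] a - c ⊗ₜ[k] (sA r * a)) ⊗ₜ[k] m} ∪
   {x | ∃ (a' : A) (y : C ⊗[k] A) (m : M),
      x = ((LinearMap.lTensor C (LinearMap.mulRight k a')) y) ⊗ₜ[k] m -
        y ⊗ₜ[k] (am a' m)})

def relX : Submodule k ((C ⊗[k] A) ⊗[k] ((C ⊗[k] A) ⊗[k] M)) := Submodule.span k
  ({x | ∃ (r : R) (c : C) (a : A) (z : (C ⊗[k] A) ⊗[k] M),
      x = ((act (tH (op r)) c) ⊗ₜ[k] a - c ⊗ₜ[k] (sA r * a)) ⊗ₜ[k] z} ∪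
   {x | ∃ (a' : A) (y : C ⊗[k] A) (z : (C ⊗[k] A) ⊗[k] M),
      x = ((LinearMap.lTensor C (LinearMap.mulRight k a')) y) ⊗ₜ[k] z -
        y ⊗ₜ[k] ((LinearMap.rTensor M (lam act ρ a')) z)} ∪
   {x | ∃ (y : C ⊗[k] A) (w : (C ⊗[k] A) ⊗[k] M), w ∈ relF tH act sA am ∧ x = y ⊗ₜ[k] w})

def vv : C ⊗[k] M →ₗ[k] (C ⊗[k] A) ⊗[k] M :=
  LinearMap.rTensor M ((TensorProduct.mk k C A).flip (1 : A))

def uu : (C ⊗[k] A) ⊗[k] M →ₗ[k] C ⊗[k] M :=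
  LinearMap.lTensor C (TensorProduct.lift am) ∘ₗ
    (TensorProduct.assoc k C A M).toLinearMap

/-- `Θ`: evaluation of `H⊗A` on `C⊗M`. -/
def Th : (H ⊗[k] A) ⊗[k] (C ⊗[k] M) →ₗ[k] C ⊗[k] M :=
  TensorProduct.map (TensorProduct.lift act) (TensorProduct.lift am) ∘ₗ
    (TensorProduct.tensorTensorTensorComm k H A C M).toLinearMap

/-- `Lmap`: evaluation of `H⊗A` on `C⊗A`. -/
def Lm : (H ⊗[k] A) ⊗[k] (C ⊗[k] A) →ₗ[k] C ⊗[k] A :=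
  TensorProduct.map (TensorProduct.lift act) (LinearMap.mul' k A) ∘ₗ
    (TensorProduct.tensorTensorTensorComm k H A C A).toLinearMap

@[simp] lemma Th_tmul (h : H) (a : A) (c : C) (m : M) :
    Th act am ((h ⊗ₜ[k] a) ⊗ₜ[k] (c ⊗ₜ[k] m)) = (act h c) ⊗ₜ[k] (am a m) := by
  simp [Th]

@[simp] lemma Lm_tmul (h : H) (a : A) (c : C) (b : A) :
    Lm act ((h ⊗ₜ[k] a) ⊗ₜ[k] (c ⊗ₜ[k] b)) = (act h c) ⊗ₜ[k] (a * b) := by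
  simp [Lm]

lemma theta_eq (a : A) (x : C ⊗[k] M) :
    theta act ρ am a x = Th act am ((ρ a) ⊗ₜ[k] x) := rfl

lemma lam_eq (a : A) (x : C ⊗[k] A) :
    lam act ρ a x = Lm act ((ρ a) ⊗ₜ[k] x) := rfl

@[simp] lemma uu_tmul (c : C) (a : A) (m : M) :
    uu am ((c ⊗ₜ[k] a) ⊗ₜ[k] m) = c ⊗ₜ[k] (am a m) := by simp [uu]

@[simp] lemma vv_tmul (c : C) (m : M) :
    (vv : C ⊗[k] M →ₗ[k] (C ⊗[k] A) ⊗[k] M) (c ⊗ₜ[k] m) = (c ⊗ₜ[k] (1:A)) ⊗ₜ[k] m := by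
  simp [vv]


section Lemmas

lemma Th_relA (hact : ∀ (g h : H) (c : C), act (g * h) c = act g (act h c))
    (hmul : ∀ (a b : A) (m : M), am (a * b) m = am a (am b m)) {x : H ⊗[k] A} (hx : x ∈ relA tH sA) (y : C ⊗[k] M) :
    Th act am (x ⊗ₜ[k] y) ∈ relCM tH act sA am := by
  induction hx using Submodule.span_induction with
  | mem x hxm =>
      obtain ⟨r, h, a, rfl⟩ := hxm
      induction y using TensorProduct.induction_on with
      | zero => simp
      | tmul c m =>
          rw [sub_tmul, map_sub, Th_tmul, Th_tmul, hact, hmul]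
          exact Submodule.subset_span ⟨r, act h c, am a m, rfl⟩
      | add y1 y2 h1 h2 =>
          rw [tmul_add, map_add]; exact add_mem h1 h2
  | zero => simp
  | add x y hx hy ihx ihy => rw [add_tmul, map_add]; exact add_mem ihx ihy
  | smul c x hx ih =>
      rw [← smul_tmul', map_smul] at *; exact Submodule.smul_mem _ _ ih

lemma Th_one (hact1 : ∀ c : C, act 1 c = c) (hone : ∀ m : M, am 1 m = m) (y : C ⊗[k] M) :
    Th act am (((1:H) ⊗ₜ[k] (1:A)) ⊗ₜ[k] y) = y := by
  induction y using TensorProduct.induction_on with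
  | zero => simp
  | tmul c m => rw [Th_tmul, hact1, hone]
  | add y1 y2 h1 h2 => rw [tmul_add, map_add, h1, h2]

lemma Th_mul (hact : ∀ (g h : H) (c : C), act (g * h) c = act g (act h c))
    (hmul : ∀ (a b : A) (m : M), am (a * b) m = am a (am b m)) (x x' : H ⊗[k] A) (y : C ⊗[k] M) :
    Th act am (x ⊗ₜ[k] Th act am (x' ⊗ₜ[k] y)) = Th act am ((x * x') ⊗ₜ[k] y) := by
  induction x using TensorProduct.induction_on with
  | zero => simp
  | add x1 x2 h1 h2 => rw [add_tmul, map_add, h1, h2, add_mul, add_tmul, map_add]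
  | tmul h a =>
      induction x' using TensorProduct.induction_on with
      | zero => simp
      | add x1 x2 h1 h2 =>
          rw [add_tmul, map_add, tmul_add, map_add, h1, h2, mul_add, add_tmul, map_add]
      | tmul h' a' =>
          induction y using TensorProduct.induction_on with
          | zero => simp
          | add y1 y2 h1 h2 =>
              rw [tmul_add, map_add, tmul_add, map_add, h1, h2, tmul_add, map_add]
          | tmul c m =>
              rw [Th_tmul, Th_tmul, Algebra.TensorProduct.tmul_mul_tmul, Th_tmul,
                hact, hmul]

lemma mulLeft_relA (hbgd1 : ∀ (r r' : R), sH r * tH (op r') = tH (op r') * sH r)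
    (r : R) {x : H ⊗[k] A} (hx : x ∈ relA tH sA) :
    (LinearMap.rTensor A (LinearMap.mulLeft k (sH r))) x ∈ relA tH sA := by
  induction hx using Submodule.span_induction with
  | mem x hxm =>
      obtain ⟨r', h, a, rfl⟩ := hxm
      rw [map_sub, rTensor_tmul, rTensor_tmul, mulLeft_apply, mulLeft_apply,
        ← mul_assoc, hbgd1, mul_assoc]
      exact Submodule.subset_span ⟨r', sH r * h, a, rfl⟩
  | zero => simp
  | add x y hx hy ihx ihy => rw [map_add]; exact add_mem ihx ihy
  | smul c x hx ih => rw [map_smul]; exact Submodule.smul_mem _ _ ih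

lemma mkQ_sub {N : Type*} [AddCommGroup N] [Module k N] (p : Submodule k N)
    {x y : N} (h : p.mkQ x = p.mkQ y) : x - y ∈ p := by
  rwa [Submodule.mkQ_apply, Submodule.mkQ_apply, Submodule.Quotient.eq] at h

lemma rho_sA_mem (hbgd1 : ∀ (r r' : R), sH r * tH (op r') = tH (op r') * sH r)
    (hA3 : ∀ (r : R) (a : A), (relA tH sA).mkQ (ρ (sA r * a)) =
      (relA tH sA).mkQ ((LinearMap.rTensor A (LinearMap.mulLeft k (sH r))) (ρ a)))
    (hA6 : (relA tH sA).mkQ (ρ 1) = (relA tH sA).mkQ ((1 : H) ⊗ₜ[k] (1 : A)))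
    (r : R) : ρ (sA r) - (sH r) ⊗ₜ[k] (1:A) ∈ relA tH sA := by
  have h3 := hA3 r 1
  rw [mul_one] at h3
  have e1 : ρ (sA r) - (LinearMap.rTensor A (LinearMap.mulLeft k (sH r))) (ρ 1) ∈
      relA tH sA := mkQ_sub _ h3
  have e2 : ρ 1 - (1:H) ⊗ₜ[k] (1:A) ∈ relA tH sA := mkQ_sub _ hA6
  have e3 := mulLeft_relA sH tH sA hbgd1 r e2
  rw [map_sub, rTensor_tmul, mulLeft_apply, mul_one] at e3
  have := add_mem e1 e3
  rwa [sub_add_sub_cancel] at this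


lemma theta_sub_aux (hact : ∀ (g h : H) (c : C), act (g * h) c = act g (act h c))
    (hmul : ∀ (a b : A) (m : M), am (a * b) m = am a (am b m))
    (r : R) (c : C) (m : M) (w : H ⊗[k] A) :
    Th act am (w ⊗ₜ[k] ((act (tH (op r)) c) ⊗ₜ[k] m - c ⊗ₜ[k] (am (sA r) m))) =
    Th act am (((LinearMap.rTensor A (LinearMap.mulRight k (tH (op r)))) w -
      (LinearMap.lTensor H (LinearMap.mulRight k (sA r))) w) ⊗ₜ[k] (c ⊗ₜ[k] m)) := by
  induction w using TensorProduct.induction_on with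
  | zero => simp
  | add w1 w2 h1 h2 =>
      rw [add_tmul, map_add, h1, h2, map_add, map_add, add_sub_add_comm, add_tmul, map_add]
  | tmul h b =>
      rw [tmul_sub, map_sub, Th_tmul, Th_tmul, rTensor_tmul, lTensor_tmul,
        mulRight_apply, mulRight_apply, sub_tmul, map_sub, Th_tmul, Th_tmul,
        hact, hmul]

lemma theta_relCM (hact : ∀ (g h : H) (c : C), act (g * h) c = act g (act h c))
    (hmul : ∀ (a b : A) (m : M), am (a * b) m = am a (am b m))
    (hA4 : ∀ (r : R) (a : A),
      (relA tH sA).mkQ ((LinearMap.rTensor A (LinearMap.mulRight k (tH (op r)))) (ρ a)) =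
        (relA tH sA).mkQ ((LinearMap.lTensor H (LinearMap.mulRight k (sA r))) (ρ a)))
    (a : A) {x : C ⊗[k] M} (hx : x ∈ relCM tH act sA am) :
    theta act ρ am a x ∈ relCM tH act sA am := by
  induction hx using Submodule.span_induction with
  | mem x hxm =>
      obtain ⟨r, c, m, rfl⟩ := hxm
      rw [theta_eq, theta_sub_aux tH act sA am hact hmul]
      exact Th_relA tH act sA am hact hmul (mkQ_sub _ (hA4 r a)) _
  | zero => simp
  | add x y hx hy ihx ihy => rw [map_add]; exact add_mem ihx ihy
  | smul c x hx ih => rw [map_smul]; exact Submodule.smul_mem _ _ ih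

lemma uu_lT_mulRight (hmul : ∀ (a b : A) (m : M), am (a * b) m = am a (am b m))
    (a' : A) (y : C ⊗[k] A) (m : M) :
    uu am (((LinearMap.lTensor C (LinearMap.mulRight k a')) y) ⊗ₜ[k] m) =
      uu am (y ⊗ₜ[k] (am a' m)) := by
  induction y using TensorProduct.induction_on with
  | zero => simp
  | add y1 y2 h1 h2 => rw [map_add, add_tmul, map_add, h1, h2, add_tmul, map_add]
  | tmul c a =>
      rw [lTensor_tmul, mulRight_apply, uu_tmul, uu_tmul, hmul]

lemma uu_relF (hmul : ∀ (a b : A) (m : M), am (a * b) m = am a (am b m))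
    {w : (C ⊗[k] A) ⊗[k] M} (hw : w ∈ relF tH act sA am) :
    uu am w ∈ relCM tH act sA am := by
  induction hw using Submodule.span_induction with
  | mem x hxm =>
      rcases hxm with ⟨r, c, a, m, rfl⟩ | ⟨a', y, m, rfl⟩
      · rw [sub_tmul, map_sub, uu_tmul, uu_tmul, hmul]
        exact Submodule.subset_span ⟨r, c, am a m, rfl⟩
      · rw [map_sub, uu_lT_mulRight am hmul]
        simp
  | zero => simp
  | add x y hx hy ihx ihy => rw [map_add]; exact add_mem ihx ihy
  | smul c x hx ih => rw [map_smul]; exact Submodule.smul_mem _ _ ih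

lemma vv_relCM {x : C ⊗[k] M} (hx : x ∈ relCM tH act sA am) :
    (vv : C ⊗[k] M →ₗ[k] (C ⊗[k] A) ⊗[k] M) x ∈ relF tH act sA am := by
  induction hx using Submodule.span_induction with
  | mem x hxm =>
      obtain ⟨r, c, m, rfl⟩ := hxm
      rw [map_sub, vv_tmul, vv_tmul]
      have h1 : ((act (tH (op r)) c) ⊗ₜ[k] (1:A) - c ⊗ₜ[k] (sA r * 1)) ⊗ₜ[k] m ∈
          relF tH act sA am := Submodule.subset_span (Or.inl ⟨r, c, 1, m, rfl⟩)
      have h2 : ((LinearMap.lTensor C (LinearMap.mulRight k (sA r))) (c ⊗ₜ[k] (1:A)))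
            ⊗ₜ[k] m - (c ⊗ₜ[k] (1:A)) ⊗ₜ[k] (am (sA r) m) ∈ relF tH act sA am :=
        Submodule.subset_span (Or.inr ⟨sA r, c ⊗ₜ[k] (1:A), m, rfl⟩)
      rw [mul_one, sub_tmul] at h1
      rw [lTensor_tmul, mulRight_apply, one_mul] at h2
      have := add_mem h1 h2
      rwa [sub_add_sub_cancel] at this
  | zero => simp
  | add x y hx hy ihx ihy => rw [map_add]; exact add_mem ihx ihy
  | smul c x hx ih => rw [map_smul]; exact Submodule.smul_mem _ _ ih

lemma uu_vv (hone : ∀ m : M, am 1 m = m) (x : C ⊗[k] M) :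
    uu (A := A) am ((vv : C ⊗[k] M →ₗ[k] (C ⊗[k] A) ⊗[k] M) x) = x := by
  induction x using TensorProduct.induction_on with
  | zero => simp
  | add x1 x2 h1 h2 => rw [map_add, map_add, h1, h2]
  | tmul c m => rw [vv_tmul, uu_tmul, hone]

lemma vv_uu (z : (C ⊗[k] A) ⊗[k] M) :
    (vv : C ⊗[k] M →ₗ[k] (C ⊗[k] A) ⊗[k] M) (uu am z) - z ∈ relF tH act sA am := by
  induction z using TensorProduct.induction_on with
  | zero => simp
  | add z1 z2 h1 h2 =>
      rw [map_add, map_add, add_sub_add_comm]; exact add_mem h1 h2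
  | tmul y m =>
      induction y using TensorProduct.induction_on with
      | zero => simp
      | add y1 y2 h1 h2 =>
          rw [add_tmul, map_add, map_add, add_sub_add_comm]; exact add_mem h1 h2
      | tmul c a =>
          rw [uu_tmul, vv_tmul]
          have h2 : ((LinearMap.lTensor C (LinearMap.mulRight k a)) (c ⊗ₜ[k] (1:A)))
                ⊗ₜ[k] m - (c ⊗ₜ[k] (1:A)) ⊗ₜ[k] (am a m) ∈ relF tH act sA am :=
            Submodule.subset_span (Or.inr ⟨a, c ⊗ₜ[k] (1:A), m, rfl⟩)
          rw [lTensor_tmul, mulRight_apply, one_mul] at h2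
          have := neg_mem h2
          rwa [neg_sub] at this

lemma uu_Lm (hmul : ∀ (a b : A) (m : M), am (a * b) m = am a (am b m))
    (x : H ⊗[k] A) (y : C ⊗[k] A) (m : M) :
    uu am ((Lm act (x ⊗ₜ[k] y)) ⊗ₜ[k] m) = Th act am (x ⊗ₜ[k] uu am (y ⊗ₜ[k] m)) := by
  induction x using TensorProduct.induction_on with
  | zero => simp
  | add x1 x2 h1 h2 => rw [add_tmul, map_add, add_tmul, map_add, h1, h2, add_tmul, map_add]
  | tmul h a =>
      induction y using TensorProduct.induction_on with
      | zero => simp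
      | add y1 y2 h1 h2 =>
          rw [tmul_add, map_add, add_tmul, map_add, add_tmul, map_add, h1, h2, tmul_add,
            map_add]
      | tmul c b => rw [Lm_tmul, uu_tmul, uu_tmul, Th_tmul, hmul]

lemma uu_rT_lam (hmul : ∀ (a b : A) (m : M), am (a * b) m = am a (am b m))
    (a : A) (z : (C ⊗[k] A) ⊗[k] M) :
    uu am ((LinearMap.rTensor M (lam act ρ a)) z) = theta act ρ am a (uu am z) := by
  induction z using TensorProduct.induction_on with
  | zero => simp
  | add z1 z2 h1 h2 => simp only [map_add, h1, h2]
  | tmul y m =>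
      rw [rTensor_tmul, lam_eq, uu_Lm act am hmul, theta_eq]

lemma vv_theta_relF (hmul : ∀ (a b : A) (m : M), am (a * b) m = am a (am b m))
    (a : A) (x : C ⊗[k] M) :
    (vv : C ⊗[k] M →ₗ[k] (C ⊗[k] A) ⊗[k] M) (theta act ρ am a x) -
      (LinearMap.rTensor M (lam act ρ a)) ((vv : C ⊗[k] M →ₗ[k] (C ⊗[k] A) ⊗[k] M) x) ∈
      relF tH act sA am := by
  induction x using TensorProduct.induction_on with
  | zero => simp
  | add x1 x2 h1 h2 =>
      rw [map_add, map_add, map_add, map_add, add_sub_add_comm]; exact add_mem h1 h2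
  | tmul c m =>
      rw [theta_eq, vv_tmul, rTensor_tmul, lam_eq]
      have key : ∀ w : H ⊗[k] A,
          (vv : C ⊗[k] M →ₗ[k] (C ⊗[k] A) ⊗[k] M) (Th act am (w ⊗ₜ[k] (c ⊗ₜ[k] m))) -
            (Lm act (w ⊗ₜ[k] (c ⊗ₜ[k] (1:A)))) ⊗ₜ[k] m ∈ relF tH act sA am := by
        intro w
        induction w using TensorProduct.induction_on with
        | zero => simp
        | add w1 w2 h1 h2 =>
            rw [add_tmul, map_add, map_add, add_tmul, map_add, add_tmul, add_sub_add_comm]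
            exact add_mem h1 h2
        | tmul h b =>
            rw [Th_tmul, Lm_tmul, vv_tmul, mul_one]
            have h2 : ((LinearMap.lTensor C (LinearMap.mulRight k b))
                  ((act h c) ⊗ₜ[k] (1:A))) ⊗ₜ[k] m -
                ((act h c) ⊗ₜ[k] (1:A)) ⊗ₜ[k] (am b m) ∈ relF tH act sA am :=
              Submodule.subset_span (Or.inr ⟨b, (act h c) ⊗ₜ[k] (1:A), m, rfl⟩)
            rw [lTensor_tmul, mulRight_apply, one_mul] at h2
            have := neg_mem h2
            rwa [neg_sub] at this
      exact key (ρ a)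


lemma counit_vv (εC : C →ₗ[k] R) (x : C ⊗[k] M) :
    (TensorProduct.lift (am ∘ₗ LinearMap.mul' k A ∘ₗ
      TensorProduct.map (sA.toLinearMap ∘ₗ εC) LinearMap.id))
      ((vv : C ⊗[k] M →ₗ[k] (C ⊗[k] A) ⊗[k] M) x) =
    (TensorProduct.lift (am ∘ₗ sA.toLinearMap ∘ₗ εC)) x := by
  induction x using TensorProduct.induction_on with
  | zero => simp
  | add x1 x2 h1 h2 => rw [map_add, map_add, h1, h2, map_add]
  | tmul c m => simp [vv]

lemma counit_uu (εC : C →ₗ[k] R)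
    (hmul : ∀ (a b : A) (m : M), am (a * b) m = am a (am b m))
    (z : (C ⊗[k] A) ⊗[k] M) :
    (TensorProduct.lift (am ∘ₗ sA.toLinearMap ∘ₗ εC)) (uu am z) =
    (TensorProduct.lift (am ∘ₗ LinearMap.mul' k A ∘ₗ
      TensorProduct.map (sA.toLinearMap ∘ₗ εC) LinearMap.id)) z := by
  induction z using TensorProduct.induction_on with
  | zero => simp
  | add z1 z2 h1 h2 => rw [map_add, map_add, h1, h2, map_add]
  | tmul y m =>
      induction y using TensorProduct.induction_on with
      | zero => simp
      | add y1 y2 h1 h2 =>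
          rw [add_tmul, map_add, map_add, h1, h2, map_add]
      | tmul c a => simp [hmul]

/-- `W : C ⊗ (C ⊗ M) → (C⊗A) ⊗ ((C⊗A) ⊗ M)`. -/
def W : C ⊗[k] (C ⊗[k] M) →ₗ[k] (C ⊗[k] A) ⊗[k] ((C ⊗[k] A) ⊗[k] M) :=
  LinearMap.rTensor ((C ⊗[k] A) ⊗[k] M) ((TensorProduct.mk k C A).flip (1 : A)) ∘ₗ
    LinearMap.lTensor C (vv : C ⊗[k] M →ₗ[k] (C ⊗[k] A) ⊗[k] M)

@[simp] lemma W_tmul (c : C) (y : C ⊗[k] M) :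
    (W : C ⊗[k] (C ⊗[k] M) →ₗ[k] (C ⊗[k] A) ⊗[k] ((C ⊗[k] A) ⊗[k] M)) (c ⊗ₜ[k] y) =
      (c ⊗ₜ[k] (1:A)) ⊗ₜ[k] ((vv : C ⊗[k] M →ₗ[k] (C ⊗[k] A) ⊗[k] M) y) := by
  simp [W]

/-- `Phi : (C⊗A) ⊗ (C⊗M) → C ⊗ (C⊗M)`, `(c⊗a)⊗y ↦ c ⊗ (θ_a y)`. -/
def Phi : (C ⊗[k] A) ⊗[k] (C ⊗[k] M) →ₗ[k] C ⊗[k] (C ⊗[k] M) :=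
  LinearMap.lTensor C (Th act am ∘ₗ LinearMap.rTensor (C ⊗[k] M) ρ) ∘ₗ
    (TensorProduct.assoc k C A (C ⊗[k] M)).toLinearMap

@[simp] lemma Phi_tmul (c : C) (a : A) (y : C ⊗[k] M) :
    Phi act ρ am ((c ⊗ₜ[k] a) ⊗ₜ[k] y) = c ⊗ₜ[k] Th act am ((ρ a) ⊗ₜ[k] y) := by
  simp [Phi]

/-- `UU : (C⊗A) ⊗ ((C⊗A) ⊗ M) → C ⊗ (C ⊗ M)`. -/
def UU : (C ⊗[k] A) ⊗[k] ((C ⊗[k] A) ⊗[k] M) →ₗ[k] C ⊗[k] (C ⊗[k] M) :=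
  Phi act ρ am ∘ₗ LinearMap.lTensor (C ⊗[k] A) (uu am)

@[simp] lemma UU_tmul (y : C ⊗[k] A) (z : (C ⊗[k] A) ⊗[k] M) :
    UU act ρ am (y ⊗ₜ[k] z) = Phi act ρ am (y ⊗ₜ[k] uu am z) := by
  simp [UU]

lemma tmul_relCM (c : C) {x : C ⊗[k] M} (hx : x ∈ relCM tH act sA am) :
    c ⊗ₜ[k] x ∈ rel3CM sH tH act sA am := by
  induction hx using Submodule.span_induction with
  | mem x hxm =>
      obtain ⟨r, c', m, rfl⟩ := hxm
      rw [tmul_sub]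
      exact Submodule.subset_span (Or.inr ⟨r, c, c', m, rfl⟩)
  | zero => simp
  | add x y hx hy ihx ihy => rw [tmul_add]; exact add_mem ihx ihy
  | smul a x hx ih => rw [tmul_smul]; exact Submodule.smul_mem _ _ ih

lemma rT_act_Th (hact : ∀ (g h : H) (c : C), act (g * h) c = act g (act h c))
    (r : R) (h : H) (b : A) (w : C ⊗[k] M) :
    (LinearMap.rTensor M (act (sH r))) (Th act am ((h ⊗ₜ[k] b) ⊗ₜ[k] w)) =
      Th act am (((sH r * h) ⊗ₜ[k] b) ⊗ₜ[k] w) := by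
  induction w using TensorProduct.induction_on with
  | zero => simp
  | add w1 w2 h1 h2 => rw [tmul_add, map_add, map_add, h1, h2, tmul_add, map_add]
  | tmul c m => rw [Th_tmul, Th_tmul, rTensor_tmul, hact]

lemma takeuchi_rel3 (hact : ∀ (g h : H) (c : C), act (g * h) c = act g (act h c))
    (r : R) (c : C) (x : H ⊗[k] A) (w : C ⊗[k] M) :
    (act (tH (op r)) c) ⊗ₜ[k] Th act am (x ⊗ₜ[k] w) -
      c ⊗ₜ[k] Th act am (((LinearMap.rTensor A (LinearMap.mulLeft k (sH r))) x) ⊗ₜ[k] w) ∈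
      rel3CM sH tH act sA am := by
  induction x using TensorProduct.induction_on with
  | zero => simp
  | add x1 x2 h1 h2 =>
      rw [add_tmul, map_add, tmul_add, map_add, add_tmul, map_add, tmul_add,
        add_sub_add_comm]
      exact add_mem h1 h2
  | tmul h b =>
      rw [rTensor_tmul, mulLeft_apply, ← rT_act_Th sH act am hact]
      exact Submodule.subset_span (Or.inl ⟨r, c, Th act am ((h ⊗ₜ[k] b) ⊗ₜ[k] w), rfl⟩)


lemma relX_rel3CM (hact : ∀ (g h : H) (c : C), act (g * h) c = act g (act h c))
    (hmul : ∀ (a b : A) (m : M), am (a * b) m = am a (am b m))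
    (hA3 : ∀ (r : R) (a : A), (relA tH sA).mkQ (ρ (sA r * a)) =
      (relA tH sA).mkQ ((LinearMap.rTensor A (LinearMap.mulLeft k (sH r))) (ρ a)))
    (hA4 : ∀ (r : R) (a : A),
      (relA tH sA).mkQ ((LinearMap.rTensor A (LinearMap.mulRight k (tH (op r)))) (ρ a)) =
        (relA tH sA).mkQ ((LinearMap.lTensor H (LinearMap.mulRight k (sA r))) (ρ a)))
    (hA5 : ∀ a b : A, (relA tH sA).mkQ (ρ (a * b)) = (relA tH sA).mkQ (ρ a * ρ b))
    {t : (C ⊗[k] A) ⊗[k] ((C ⊗[k] A) ⊗[k] M)} (ht : t ∈ relX tH act sA ρ am) :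
    UU act ρ am t ∈ rel3CM sH tH act sA am := by
  induction ht using Submodule.span_induction with
  | mem x hxm =>
      rcases hxm with (⟨r, c, a, z, rfl⟩ | ⟨a', y, z, rfl⟩) | ⟨y, w', hw', rfl⟩
      · rw [UU_tmul, sub_tmul, map_sub, Phi_tmul, Phi_tmul]
        have hE1 := takeuchi_rel3 sH tH act sA am hact r c (ρ a) (uu am z)
        have hd : ρ (sA r * a) -
            (LinearMap.rTensor A (LinearMap.mulLeft k (sH r))) (ρ a) ∈ relA tH sA :=
          mkQ_sub _ (hA3 r a)
        have hE2 := tmul_relCM sH tH act sA am c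
          (Th_relA tH act sA am hact hmul hd (uu am z))
        rw [sub_tmul, map_sub, tmul_sub] at hE2
        have := sub_mem hE1 hE2
        rwa [sub_sub_sub_cancel_right] at this
      · rw [map_sub, UU_tmul, UU_tmul, uu_rT_lam act ρ am hmul, theta_eq]
        have key : ∀ (y : C ⊗[k] A),
            Phi act ρ am (((LinearMap.lTensor C (LinearMap.mulRight k a')) y) ⊗ₜ[k]
              (uu am z)) -
            Phi act ρ am (y ⊗ₜ[k] Th act am ((ρ a') ⊗ₜ[k] (uu am z))) ∈
              rel3CM sH tH act sA am := by
          intro y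
          induction y using TensorProduct.induction_on with
          | zero => simp
          | add y1 y2 h1 h2 =>
              rw [map_add, add_tmul, map_add, add_tmul, map_add, add_sub_add_comm]
              exact add_mem h1 h2
          | tmul c a =>
              rw [lTensor_tmul, mulRight_apply, Phi_tmul, Phi_tmul,
                Th_mul act am hact hmul]
              have hd : ρ (a * a') - ρ a * ρ a' ∈ relA tH sA := mkQ_sub _ (hA5 a a')
              have := tmul_relCM sH tH act sA am c
                (Th_relA tH act sA am hact hmul hd (uu am z))
              rwa [sub_tmul, map_sub, tmul_sub] at this
        exact key y
      · rw [UU_tmul]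
        have hx := uu_relF tH act sA am hmul hw'
        have key : ∀ (y : C ⊗[k] A) {x : C ⊗[k] M}, x ∈ relCM tH act sA am →
            Phi act ρ am (y ⊗ₜ[k] x) ∈ rel3CM sH tH act sA am := by
          intro y
          induction y using TensorProduct.induction_on with
          | zero => intro x hx; simp
          | add y1 y2 h1 h2 =>
              intro x hx
              rw [add_tmul, map_add]; exact add_mem (h1 hx) (h2 hx)
          | tmul c a =>
              intro x hx
              rw [Phi_tmul, ← theta_eq]
              exact tmul_relCM sH tH act sA am c
                (theta_relCM tH act sA ρ am hact hmul hA4 a hx)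
        exact key y hx
  | zero => simp
  | add x y hx hy ihx ihy => rw [map_add]; exact add_mem ihx ihy
  | smul c x hx ih => rw [map_smul]; exact Submodule.smul_mem _ _ ih

lemma Lm_relA_relF (hact : ∀ (g h : H) (c : C), act (g * h) c = act g (act h c))
    {w : H ⊗[k] A} (hw : w ∈ relA tH sA) (y' : C ⊗[k] A) (m : M) :
    (Lm act (w ⊗ₜ[k] y')) ⊗ₜ[k] m ∈ relF tH act sA am := by
  induction hw using Submodule.span_induction with
  | mem x hxm =>
      obtain ⟨r', h, a, rfl⟩ := hxm
      induction y' using TensorProduct.induction_on with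
      | zero => simp
      | add y1 y2 h1 h2 =>
          rw [tmul_add, map_add, add_tmul]; exact add_mem h1 h2
      | tmul c'' a'' =>
          rw [sub_tmul, map_sub, Lm_tmul, Lm_tmul, hact, mul_assoc]
          exact Submodule.subset_span (Or.inl ⟨r', act h c'', a * a'', m, rfl⟩)
  | zero => simp
  | add x y hx hy ihx ihy =>
      rw [add_tmul, map_add, add_tmul]; exact add_mem ihx ihy
  | smul c x hx ih =>
      rw [← smul_tmul', map_smul, ← smul_tmul']; exact Submodule.smul_mem _ _ ih

lemma lam_vv_relF (hact : ∀ (g h : H) (c : C), act (g * h) c = act g (act h c))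
    (hbgd1 : ∀ (r r' : R), sH r * tH (op r') = tH (op r') * sH r)
    (hA3 : ∀ (r : R) (a : A), (relA tH sA).mkQ (ρ (sA r * a)) =
      (relA tH sA).mkQ ((LinearMap.rTensor A (LinearMap.mulLeft k (sH r))) (ρ a)))
    (hA6 : (relA tH sA).mkQ (ρ 1) = (relA tH sA).mkQ ((1 : H) ⊗ₜ[k] (1 : A)))
    (r : R) (y : C ⊗[k] M) :
    (LinearMap.rTensor M (lam act ρ (sA r)))
        ((vv : C ⊗[k] M →ₗ[k] (C ⊗[k] A) ⊗[k] M) y) -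
      (vv : C ⊗[k] M →ₗ[k] (C ⊗[k] A) ⊗[k] M) ((LinearMap.rTensor M (act (sH r))) y) ∈
      relF tH act sA am := by
  induction y using TensorProduct.induction_on with
  | zero => simp
  | add y1 y2 h1 h2 =>
      rw [map_add, map_add, map_add, map_add, add_sub_add_comm]
      exact add_mem h1 h2
  | tmul c' m =>
      rw [vv_tmul, rTensor_tmul, rTensor_tmul, vv_tmul, lam_eq]
      have he : (act (sH r) c') ⊗ₜ[k] (1:A) =
          Lm act (((sH r) ⊗ₜ[k] (1:A)) ⊗ₜ[k] (c' ⊗ₜ[k] (1:A))) := by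
        rw [Lm_tmul, one_mul]
      rw [he, ← sub_tmul, ← map_sub, ← sub_tmul]
      exact Lm_relA_relF tH act sA am hact
        (rho_sA_mem sH tH sA ρ hbgd1 hA3 hA6 r) (c' ⊗ₜ[k] (1:A)) m

lemma rel3CM_relX (hact : ∀ (g h : H) (c : C), act (g * h) c = act g (act h c))
    (hbgd1 : ∀ (r r' : R), sH r * tH (op r') = tH (op r') * sH r)
    (hA3 : ∀ (r : R) (a : A), (relA tH sA).mkQ (ρ (sA r * a)) =
      (relA tH sA).mkQ ((LinearMap.rTensor A (LinearMap.mulLeft k (sH r))) (ρ a)))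
    (hA6 : (relA tH sA).mkQ (ρ 1) = (relA tH sA).mkQ ((1 : H) ⊗ₜ[k] (1 : A)))
    {t : C ⊗[k] (C ⊗[k] M)} (ht : t ∈ rel3CM sH tH act sA am) :
    (W : C ⊗[k] (C ⊗[k] M) →ₗ[k] (C ⊗[k] A) ⊗[k] ((C ⊗[k] A) ⊗[k] M)) t ∈
      relX tH act sA ρ am := by
  induction ht using Submodule.span_induction with
  | mem x hxm =>
      rcases hxm with ⟨r, c, y, rfl⟩ | ⟨r, c, c', m, rfl⟩
      · rw [map_sub, W_tmul, W_tmul]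
        have h1 : ((act (tH (op r)) c) ⊗ₜ[k] (1:A) - c ⊗ₜ[k] (sA r * 1)) ⊗ₜ[k]
            ((vv : C ⊗[k] M →ₗ[k] (C ⊗[k] A) ⊗[k] M) y) ∈ relX tH act sA ρ am :=
          Submodule.subset_span (Or.inl (Or.inl ⟨r, c, 1, _, rfl⟩))
        rw [mul_one, sub_tmul] at h1
        have h2 : ((LinearMap.lTensor C (LinearMap.mulRight k (sA r)))
              (c ⊗ₜ[k] (1:A))) ⊗ₜ[k] ((vv : C ⊗[k] M →ₗ[k] (C ⊗[k] A) ⊗[k] M) y) -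
            (c ⊗ₜ[k] (1:A)) ⊗ₜ[k] ((LinearMap.rTensor M (lam act ρ (sA r)))
              ((vv : C ⊗[k] M →ₗ[k] (C ⊗[k] A) ⊗[k] M) y)) ∈ relX tH act sA ρ am :=
          Submodule.subset_span (Or.inl (Or.inr ⟨sA r, c ⊗ₜ[k] (1:A), _, rfl⟩))
        rw [lTensor_tmul, mulRight_apply, one_mul] at h2
        have h3 : (c ⊗ₜ[k] (1:A)) ⊗ₜ[k]
            ((LinearMap.rTensor M (lam act ρ (sA r)))
              ((vv : C ⊗[k] M →ₗ[k] (C ⊗[k] A) ⊗[k] M) y) -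
             (vv : C ⊗[k] M →ₗ[k] (C ⊗[k] A) ⊗[k] M)
              ((LinearMap.rTensor M (act (sH r))) y)) ∈ relX tH act sA ρ am :=
          Submodule.subset_span (Or.inr ⟨c ⊗ₜ[k] (1:A), _,
            lam_vv_relF sH tH act sA ρ am hact hbgd1 hA3 hA6 r y, rfl⟩)
        rw [tmul_sub] at h3
        have h12 := add_mem h1 h2
        rw [sub_add_sub_cancel] at h12
        have := add_mem h12 h3
        rwa [sub_add_sub_cancel] at this
      · rw [← tmul_sub, W_tmul]
        exact Submodule.subset_span (Or.inr ⟨c ⊗ₜ[k] (1:A), _,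
          vv_relCM tH act sA am (Submodule.subset_span ⟨r, c', m, rfl⟩),
          by rw [map_sub, vv_tmul, vv_tmul]⟩)
  | zero => simp
  | add x y hx hy ihx ihy => rw [map_add]; exact add_mem ihx ihy
  | smul c x hx ih => rw [map_smul]; exact Submodule.smul_mem _ _ ih


lemma mkQ_eq {N : Type*} [AddCommGroup N] [Module k N] (p : Submodule k N)
    {x y : N} (h : x - y ∈ p) : p.mkQ x = p.mkQ y := by
  rw [Submodule.mkQ_apply, Submodule.mkQ_apply, Submodule.Quotient.eq]; exact h

variable (ΔC : C →ₗ[k] C ⊗[k] C)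

def Dp : C ⊗[k] A →ₗ[k] (C ⊗[k] A) ⊗[k] (C ⊗[k] A) :=
  TensorProduct.map ((TensorProduct.mk k C A).flip (1 : A)) LinearMap.id ∘ₗ
    (TensorProduct.assoc k C C A).toLinearMap ∘ₗ LinearMap.rTensor A ΔC

lemma Dp_tmul (c : C) (a : A) :
    Dp ΔC (c ⊗ₜ[k] a) = TensorProduct.map ((TensorProduct.mk k C A).flip (1 : A))
      LinearMap.id ((TensorProduct.assoc k C C A) ((ΔC c) ⊗ₜ[k] a)) := by
  simp [Dp]

lemma Dp_vv (x : C ⊗[k] M) :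
    (TensorProduct.assoc k (C ⊗[k] A) (C ⊗[k] A) M)
        ((LinearMap.rTensor M (Dp ΔC))
          ((vv : C ⊗[k] M →ₗ[k] (C ⊗[k] A) ⊗[k] M) x)) =
      (W : C ⊗[k] (C ⊗[k] M) →ₗ[k] (C ⊗[k] A) ⊗[k] ((C ⊗[k] A) ⊗[k] M))
        ((TensorProduct.assoc k C C M) ((LinearMap.rTensor M ΔC) x)) := by
  induction x using TensorProduct.induction_on with
  | zero => simp
  | add x1 x2 h1 h2 => simp only [map_add, LinearEquiv.map_add, h1, h2]
  | tmul c m =>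
      rw [vv_tmul, rTensor_tmul, rTensor_tmul, Dp_tmul]
      have key : ∀ q : C ⊗[k] C,
          (TensorProduct.assoc k (C ⊗[k] A) (C ⊗[k] A) M)
            ((TensorProduct.map ((TensorProduct.mk k C A).flip (1 : A)) LinearMap.id
              ((TensorProduct.assoc k C C A) (q ⊗ₜ[k] (1:A)))) ⊗ₜ[k] m) =
          (W : C ⊗[k] (C ⊗[k] M) →ₗ[k] (C ⊗[k] A) ⊗[k] ((C ⊗[k] A) ⊗[k] M))
            ((TensorProduct.assoc k C C M) (q ⊗ₜ[k] m)) := by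
        intro q
        induction q using TensorProduct.induction_on with
        | zero => simp
        | add q1 q2 h1 h2 =>
            simp only [add_tmul, LinearEquiv.map_add, map_add, h1, h2]
        | tmul c1 c2 => simp
      exact key (ΔC c)

lemma lT_vv (f : M →ₗ[k] C ⊗[k] M) (x : C ⊗[k] M) :
    LinearMap.lTensor (C ⊗[k] A)
        ((vv : C ⊗[k] M →ₗ[k] (C ⊗[k] A) ⊗[k] M) ∘ₗ f)
        ((vv : C ⊗[k] M →ₗ[k] (C ⊗[k] A) ⊗[k] M) x) =
      (W : C ⊗[k] (C ⊗[k] M) →ₗ[k] (C ⊗[k] A) ⊗[k] ((C ⊗[k] A) ⊗[k] M))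
        (LinearMap.lTensor C f x) := by
  induction x using TensorProduct.induction_on with
  | zero => simp
  | add x1 x2 h1 h2 => simp only [map_add, h1, h2]
  | tmul c m => rw [vv_tmul, lTensor_tmul, lTensor_tmul, W_tmul, LinearMap.comp_apply]

lemma UU_Dp (hact : ∀ (g h : H) (c : C), act (g * h) c = act g (act h c))
    (hact1 : ∀ c : C, act 1 c = c)
    (hmul : ∀ (a b : A) (m : M), am (a * b) m = am a (am b m))
    (hone : ∀ m : M, am 1 m = m)
    (hA6 : (relA tH sA).mkQ (ρ 1) = (relA tH sA).mkQ ((1 : H) ⊗ₜ[k] (1 : A)))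
    (z : (C ⊗[k] A) ⊗[k] M) :
    UU act ρ am ((TensorProduct.assoc k (C ⊗[k] A) (C ⊗[k] A) M)
        ((LinearMap.rTensor M (Dp ΔC)) z)) -
      (TensorProduct.assoc k C C M) ((LinearMap.rTensor M ΔC) (uu am z)) ∈
      rel3CM sH tH act sA am := by
  induction z using TensorProduct.induction_on with
  | zero => simp
  | add z1 z2 h1 h2 =>
      simp only [map_add, LinearEquiv.map_add]
      rw [add_sub_add_comm]; exact add_mem h1 h2
  | tmul Y m =>
      induction Y using TensorProduct.induction_on with
      | zero => simp
      | add Y1 Y2 h1 h2 =>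
          simp only [add_tmul, map_add, LinearEquiv.map_add]
          rw [add_sub_add_comm]; exact add_mem h1 h2
      | tmul c a =>
          rw [rTensor_tmul, uu_tmul, rTensor_tmul, Dp_tmul]
          have key : ∀ q : C ⊗[k] C,
              UU act ρ am ((TensorProduct.assoc k (C ⊗[k] A) (C ⊗[k] A) M)
                ((TensorProduct.map ((TensorProduct.mk k C A).flip (1 : A)) LinearMap.id
                  ((TensorProduct.assoc k C C A) (q ⊗ₜ[k] a))) ⊗ₜ[k] m)) -
              (TensorProduct.assoc k C C M) (q ⊗ₜ[k] (am a m)) ∈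
              rel3CM sH tH act sA am := by
            intro q
            induction q using TensorProduct.induction_on with
            | zero => simp
            | add q1 q2 h1 h2 =>
                simp only [add_tmul, LinearEquiv.map_add, map_add]
                rw [add_sub_add_comm]; exact add_mem h1 h2
            | tmul c1 c2 =>
                simp only [assoc_tmul, map_tmul, LinearMap.flip_apply,
                  TensorProduct.mk_apply, LinearMap.id_coe, id_eq, UU_tmul, uu_tmul,
                  Phi_tmul]
                have hd : ρ 1 - (1:H) ⊗ₜ[k] (1:A) ∈ relA tH sA := mkQ_sub _ hA6
                have := tmul_relCM sH tH act sA am c1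
                  (Th_relA tH act sA am hact hmul hd (c2 ⊗ₜ[k] (am a m)))
                rwa [sub_tmul, map_sub, Th_one act am hact1 hone, tmul_sub] at this
          exact key (ΔC c)

lemma UU_lT (f : M →ₗ[k] (C ⊗[k] A) ⊗[k] M)
    (hlin : ∀ (a : A) (m : M),
      uu am (f (am a m)) - theta act ρ am a (uu am (f m)) ∈ relCM tH act sA am)
    (z : (C ⊗[k] A) ⊗[k] M) :
    UU act ρ am (LinearMap.lTensor (C ⊗[k] A) f z) -
      LinearMap.lTensor C (uu am ∘ₗ f) (uu am z) ∈ rel3CM sH tH act sA am := by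
  induction z using TensorProduct.induction_on with
  | zero => simp
  | add z1 z2 h1 h2 =>
      simp only [map_add]
      rw [add_sub_add_comm]; exact add_mem h1 h2
  | tmul Y m =>
      induction Y using TensorProduct.induction_on with
      | zero => simp
      | add Y1 Y2 h1 h2 =>
          simp only [add_tmul, map_add]
          rw [add_sub_add_comm]; exact add_mem h1 h2
      | tmul c a =>
          rw [lTensor_tmul, UU_tmul, uu_tmul, lTensor_tmul, LinearMap.comp_apply,
            Phi_tmul, ← theta_eq]
          have := tmul_relCM sH tH act sA am c (hlin a m)
          rw [tmul_sub] at this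
          have h2 := neg_mem this
          rwa [neg_sub] at h2


variable (εC : C →ₗ[k] R)

def DKc (ρM : M →ₗ[k] C ⊗[k] M) : Prop :=
  (∀ m : M, (rel3CM sH tH act sA am).mkQ
      ((TensorProduct.assoc k C C M) ((LinearMap.rTensor M ΔC) (ρM m))) =
    (rel3CM sH tH act sA am).mkQ ((LinearMap.lTensor C ρM) (ρM m))) ∧
  (∀ m : M, (TensorProduct.lift (am ∘ₗ sA.toLinearMap ∘ₗ εC)) (ρM m) = m) ∧
  (∀ (a : A) (m : M), (relCM tH act sA am).mkQ (ρM (am a m)) =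
    (relCM tH act sA am).mkQ (theta act ρ am a (ρM m)))

def Cc (ρ' : M →ₗ[k] (C ⊗[k] A) ⊗[k] M) : Prop :=
  (∀ m : M, (relX tH act sA ρ am).mkQ
      ((TensorProduct.assoc k (C ⊗[k] A) (C ⊗[k] A) M)
        ((LinearMap.rTensor M (Dp ΔC)) (ρ' m))) =
    (relX tH act sA ρ am).mkQ ((LinearMap.lTensor (C ⊗[k] A) ρ') (ρ' m))) ∧
  (∀ m : M, (TensorProduct.lift (am ∘ₗ LinearMap.mul' k A ∘ₗ
      TensorProduct.map (sA.toLinearMap ∘ₗ εC) LinearMap.id)) (ρ' m) = m) ∧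
  (∀ (a : A) (m : M), (relF tH act sA am).mkQ (ρ' (am a m)) =
    (relF tH act sA am).mkQ ((LinearMap.rTensor M (lam act ρ a)) (ρ' m)))

theorem dir1 (hbgd1 : ∀ (r r' : R), sH r * tH (op r') = tH (op r') * sH r)
    (hact : ∀ (g h : H) (c : C), act (g * h) c = act g (act h c))
    (hmul : ∀ (a b : A) (m : M), am (a * b) m = am a (am b m))
    (hA3 : ∀ (r : R) (a : A), (relA tH sA).mkQ (ρ (sA r * a)) =
      (relA tH sA).mkQ ((LinearMap.rTensor A (LinearMap.mulLeft k (sH r))) (ρ a)))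
    (hA6 : (relA tH sA).mkQ (ρ 1) = (relA tH sA).mkQ ((1 : H) ⊗ₜ[k] (1 : A)))
    (ρM : M →ₗ[k] C ⊗[k] M) (h : DKc sH tH act sA ρ am ΔC εC ρM) :
    Cc tH act sA ρ am ΔC εC
      ((vv : C ⊗[k] M →ₗ[k] (C ⊗[k] A) ⊗[k] M) ∘ₗ ρM) := by
  obtain ⟨hco, hcu, hlin⟩ := h
  refine ⟨fun m => ?_, fun m => ?_, fun a m => ?_⟩
  · simp only [LinearMap.comp_apply]
    rw [Dp_vv, lT_vv]
    refine mkQ_eq _ ?_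
    have hh := rel3CM_relX sH tH act sA ρ am hact hbgd1 hA3 hA6 (mkQ_sub _ (hco m))
    rwa [map_sub] at hh
  · rw [LinearMap.comp_apply, counit_vv sA am εC]
    exact hcu m
  · simp only [LinearMap.comp_apply]
    have h1 : (relF tH act sA am).mkQ
          ((vv : C ⊗[k] M →ₗ[k] (C ⊗[k] A) ⊗[k] M) (ρM (am a m))) =
        (relF tH act sA am).mkQ
          ((vv : C ⊗[k] M →ₗ[k] (C ⊗[k] A) ⊗[k] M) (theta act ρ am a (ρM m))) := by
      refine mkQ_eq _ ?_
      have hh := vv_relCM tH act sA am (mkQ_sub _ (hlin a m))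
      rwa [map_sub] at hh
    rw [h1]
    exact mkQ_eq _ (vv_theta_relF tH act sA ρ am hmul a (ρM m))

theorem dir2 (hact : ∀ (g h : H) (c : C), act (g * h) c = act g (act h c))
    (hact1 : ∀ c : C, act 1 c = c)
    (hmul : ∀ (a b : A) (m : M), am (a * b) m = am a (am b m))
    (hone : ∀ m : M, am 1 m = m)
    (hA3 : ∀ (r : R) (a : A), (relA tH sA).mkQ (ρ (sA r * a)) =
      (relA tH sA).mkQ ((LinearMap.rTensor A (LinearMap.mulLeft k (sH r))) (ρ a)))
    (hA4 : ∀ (r : R) (a : A),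
      (relA tH sA).mkQ ((LinearMap.rTensor A (LinearMap.mulRight k (tH (op r)))) (ρ a)) =
        (relA tH sA).mkQ ((LinearMap.lTensor H (LinearMap.mulRight k (sA r))) (ρ a)))
    (hA5 : ∀ a b : A, (relA tH sA).mkQ (ρ (a * b)) = (relA tH sA).mkQ (ρ a * ρ b))
    (hA6 : (relA tH sA).mkQ (ρ 1) = (relA tH sA).mkQ ((1 : H) ⊗ₜ[k] (1 : A)))
    (ρ' : M →ₗ[k] (C ⊗[k] A) ⊗[k] M) (h : Cc tH act sA ρ am ΔC εC ρ') :
    DKc sH tH act sA ρ am ΔC εC (uu am ∘ₗ ρ') := by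
  obtain ⟨hco, hcu, hlin⟩ := h
  have hlin' : ∀ (a : A) (m : M),
      (relCM tH act sA am).mkQ (uu am (ρ' (am a m))) =
        (relCM tH act sA am).mkQ (theta act ρ am a (uu am (ρ' m))) := by
    intro a m
    have h0 := uu_relF tH act sA am hmul (mkQ_sub _ (hlin a m))
    rw [map_sub, uu_rT_lam act ρ am hmul] at h0
    exact mkQ_eq _ h0
  refine ⟨fun m => ?_, fun m => ?_, fun a m => ?_⟩
  · simp only [LinearMap.comp_apply]
    have h1 := UU_Dp sH tH act sA ρ am ΔC hact hact1 hmul hone hA6 (ρ' m)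
    have h2 : UU act ρ am ((TensorProduct.assoc k (C ⊗[k] A) (C ⊗[k] A) M)
          ((LinearMap.rTensor M (Dp ΔC)) (ρ' m))) -
        UU act ρ am ((LinearMap.lTensor (C ⊗[k] A) ρ') (ρ' m)) ∈
        rel3CM sH tH act sA am := by
      have hh := relX_rel3CM sH tH act sA ρ am hact hmul hA3 hA4 hA5 (mkQ_sub _ (hco m))
      rwa [map_sub] at hh
    have h3 := UU_lT sH tH act sA ρ am ρ'
      (fun a m => mkQ_sub _ (hlin' a m)) (ρ' m)
    have h4 := add_mem (add_mem (neg_mem h1) h2) h3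
    rw [neg_sub, sub_add_sub_cancel, sub_add_sub_cancel] at h4
    have h5 := mkQ_eq _ h4
    simpa only [LinearMap.comp_apply] using h5
  · rw [LinearMap.comp_apply, counit_uu sA am εC hmul]
    exact hcu m
  · simp only [LinearMap.comp_apply]
    exact hlin' a m

theorem dir3 (hone : ∀ m : M, am 1 m = m) (x : C ⊗[k] M) :
    (relCM tH act sA am).mkQ
        (uu am ((vv : C ⊗[k] M →ₗ[k] (C ⊗[k] A) ⊗[k] M) x)) =
      (relCM tH act sA am).mkQ x := by
  rw [uu_vv am hone]

theorem dir4 (z : (C ⊗[k] A) ⊗[k] M) :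
    (relF tH act sA am).mkQ
        ((vv : C ⊗[k] M →ₗ[k] (C ⊗[k] A) ⊗[k] M) (uu am z)) =
      (relF tH act sA am).mkQ z :=
  mkQ_eq _ (vv_uu tH act sA am z)

end Lemmas
end S17

end

/-- Let `(H, A, C)_R` be a Doi-Koppinen datum over `R` and `𝒞 = C ⊗_R A` the
associated `A`-coring.  The category of left `𝒞`-comodules is isomorphic to the category
of left-left Doi-Koppinen modules over `R`: for any left `A`-module `M`, the structures of
a left `𝒞`-comodule and of a Doi-Koppinen module on `M` correspond bijectively via the
canonical isomorphism `𝒞 ⊗_A M = C ⊗_R A ⊗_A M ≅ C ⊗_R M`, `(c ⊗ a) ⊗ m ↦ c ⊗ a·m`,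
`c ⊗ m ↦ (c ⊗ 1) ⊗ m`. -/
theorem stmt17 (k : Type*) [CommRing k] (R H : Type*) [Ring R] [Ring H]
    [Algebra k R] [Algebra k H]
    (sH : R →ₐ[k] H) (tH : Rᵐᵒᵖ →ₐ[k] H)
    (ΔH : H →ₗ[k] H ⊗[k] H) (εH : H →ₗ[k] R)
    (C : Type*) [AddCommGroup C] [Module k C]
    (act : H →ₗ[k] C →ₗ[k] C) (ΔC : C →ₗ[k] C ⊗[k] C) (εC : C →ₗ[k] R)
    (A : Type*) [Ring A] [Algebra k A] (sA : R →ₐ[k] A) (ρ : A →ₗ[k] H ⊗[k] A)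
    (hbgd : BGD.IsBialgebroid k R H sH tH ΔH εH)
    (hC : BGD.IsModuleCoalgebra k R H sH tH ΔH εH C act ΔC εC)
    (hA : BGD.IsComoduleAlgebra k R H sH tH ΔH εH A sA ρ) :
    ∀ (M : Type) [AddCommGroup M] [Module k M] (am : A →ₗ[k] M →ₗ[k] M),
      (∀ (a b : A) (m : M), am (a * b) m = am a (am b m)) →
      (∀ m : M, am 1 m = m) →
      -- `C ⊗_R M` and `C ⊗_R C ⊗_R M`:
      letI relCM : Submodule k (C ⊗[k] M) := Submodule.span k
        {x | ∃ (r : R) (c : C) (m : M),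
          x = (act (tH (op r)) c) ⊗ₜ[k] m - c ⊗ₜ[k] (am (sA r) m)}
      letI rel3CM : Submodule k (C ⊗[k] (C ⊗[k] M)) := Submodule.span k
        ({x | ∃ (r : R) (c : C) (y : C ⊗[k] M),
            x = (act (tH (op r)) c) ⊗ₜ[k] y -
              c ⊗ₜ[k] ((LinearMap.rTensor M (act (sH r))) y)} ∪
         {x | ∃ (r : R) (c c' : C) (m : M),
            x = c ⊗ₜ[k] ((act (tH (op r)) c') ⊗ₜ[k] m) -
              c ⊗ₜ[k] (c' ⊗ₜ[k] (am (sA r) m))})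
      -- the diagonal action `a · (c ⊗ m) = a₍₋₁₎·c ⊗ a₍₀₎·m` on `C ⊗ M`:
      letI theta : A → (C ⊗[k] M →ₗ[k] C ⊗[k] M) := fun a =>
        (TensorProduct.map (TensorProduct.lift act) (TensorProduct.lift am) ∘ₗ
          (TensorProduct.tensorTensorTensorComm k H A C M).toLinearMap) ∘ₗ
          TensorProduct.mk k (H ⊗[k] A) (C ⊗[k] M) (ρ a)
      -- Doi-Koppinen module conditions for a coaction `ρM : M → C ⊗_R M`:
      letI DKcond : (M →ₗ[k] C ⊗[k] M) → Prop := fun ρM =>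
        (∀ m : M, rel3CM.mkQ
            ((TensorProduct.assoc k C C M) ((LinearMap.rTensor M ΔC) (ρM m))) =
          rel3CM.mkQ ((LinearMap.lTensor C ρM) (ρM m))) ∧
        (∀ m : M,
          (TensorProduct.lift (am ∘ₗ sA.toLinearMap ∘ₗ εC)) (ρM m) = m) ∧
        (∀ (a : A) (m : M),
          relCM.mkQ (ρM (am a m)) = relCM.mkQ (theta a (ρM m)))
      -- `𝒞 ⊗_A M` as a quotient of `(C ⊗ A) ⊗ M`; the left `A`-action on `C ⊗ A`:
      letI lam : A → (C ⊗[k] A →ₗ[k] C ⊗[k] A) := fun a =>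
        (TensorProduct.map (TensorProduct.lift act) (LinearMap.mul' k A) ∘ₗ
          (TensorProduct.tensorTensorTensorComm k H A C A).toLinearMap) ∘ₗ
          TensorProduct.mk k (H ⊗[k] A) (C ⊗[k] A) (ρ a)
      letI relF : Submodule k ((C ⊗[k] A) ⊗[k] M) := Submodule.span k
        ({x | ∃ (r : R) (c : C) (a : A) (m : M),
            x = ((act (tH (op r)) c) ⊗ₜ[k] a - c ⊗ₜ[k] (sA r * a)) ⊗ₜ[k] m} ∪
         {x | ∃ (a' : A) (y : C ⊗[k] A) (m : M),
            x = ((LinearMap.lTensor C (LinearMap.mulRight k a')) y) ⊗ₜ[k] m -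
              y ⊗ₜ[k] (am a' m)})
      -- the coproduct of `𝒞` in the form `𝒞 → 𝒞 ⊗ 𝒞`, `c ⊗ a ↦ (c₍₁₎ ⊗ 1) ⊗ (c₍₂₎ ⊗ a)`:
      letI D' : C ⊗[k] A →ₗ[k] (C ⊗[k] A) ⊗[k] (C ⊗[k] A) :=
        TensorProduct.map ((TensorProduct.mk k C A).flip (1 : A)) LinearMap.id ∘ₗ
          (TensorProduct.assoc k C C A).toLinearMap ∘ₗ LinearMap.rTensor A ΔC
      letI relX : Submodule k ((C ⊗[k] A) ⊗[k] ((C ⊗[k] A) ⊗[k] M)) := Submodule.span k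
        ({x | ∃ (r : R) (c : C) (a : A) (z : (C ⊗[k] A) ⊗[k] M),
            x = ((act (tH (op r)) c) ⊗ₜ[k] a - c ⊗ₜ[k] (sA r * a)) ⊗ₜ[k] z} ∪
         {x | ∃ (a' : A) (y : C ⊗[k] A) (z : (C ⊗[k] A) ⊗[k] M),
            x = ((LinearMap.lTensor C (LinearMap.mulRight k a')) y) ⊗ₜ[k] z -
              y ⊗ₜ[k] ((LinearMap.rTensor M (lam a')) z)} ∪
         {x | ∃ (y : C ⊗[k] A) (w : (C ⊗[k] A) ⊗[k] M), w ∈ relF ∧ x = y ⊗ₜ[k] w})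
      -- `𝒞`-comodule conditions for a coaction `ρ' : M → 𝒞 ⊗_A M`:
      letI Ccond : (M →ₗ[k] (C ⊗[k] A) ⊗[k] M) → Prop := fun ρ' =>
        (∀ m : M, relX.mkQ
            ((TensorProduct.assoc k (C ⊗[k] A) (C ⊗[k] A) M)
              ((LinearMap.rTensor M D') (ρ' m))) =
          relX.mkQ ((LinearMap.lTensor (C ⊗[k] A) ρ') (ρ' m))) ∧
        (∀ m : M,
          (TensorProduct.lift (am ∘ₗ LinearMap.mul' k A ∘ₗ
            TensorProduct.map (sA.toLinearMap ∘ₗ εC) LinearMap.id)) (ρ' m) = m) ∧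
        (∀ (a : A) (m : M),
          relF.mkQ (ρ' (am a m)) = relF.mkQ ((LinearMap.rTensor M (lam a)) (ρ' m)))
      -- the mutually inverse canonical maps:
      letI v : C ⊗[k] M →ₗ[k] (C ⊗[k] A) ⊗[k] M :=
        LinearMap.rTensor M ((TensorProduct.mk k C A).flip (1 : A))
      letI u : (C ⊗[k] A) ⊗[k] M →ₗ[k] C ⊗[k] M :=
        LinearMap.lTensor C (TensorProduct.lift am) ∘ₗ
          (TensorProduct.assoc k C A M).toLinearMap
      -- the isomorphism of categories, on structures over `M`:
      (∀ ρM : M →ₗ[k] C ⊗[k] M, DKcond ρM → Ccond (v ∘ₗ ρM)) ∧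
      (∀ ρ' : M →ₗ[k] (C ⊗[k] A) ⊗[k] M, Ccond ρ' → DKcond (u ∘ₗ ρ')) ∧
      (∀ ρM : M →ₗ[k] C ⊗[k] M, DKcond ρM →
        ∀ m : M, relCM.mkQ (u (v (ρM m))) = relCM.mkQ (ρM m)) ∧
      (∀ ρ' : M →ₗ[k] (C ⊗[k] A) ⊗[k] M, Ccond ρ' →
        ∀ m : M, relF.mkQ (v (u (ρ' m))) = relF.mkQ (ρ' m)) := by
  intro M _ _ am hmul hone
  have hbgd1 := hbgd.1
  have hact := hC.1
  have hact1 := hC.2.1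
  have hA3 := hA.2.2.1
  have hA4 := hA.2.2.2.1
  have hA5 := hA.2.2.2.2.1
  have hA6 := hA.2.2.2.2.2
  exact ⟨fun ρM h => S17.dir1 sH tH act sA ρ am ΔC εC hbgd1 hact hmul hA3 hA6 ρM h,
    fun ρ' h => S17.dir2 sH tH act sA ρ am ΔC εC hact hact1 hmul hone hA3 hA4 hA5 hA6 ρ' h,
    fun ρM h m => S17.dir3 tH act sA am hone (ρM m),
    fun ρ' h m => S17.dir4 tH act sA am (ρ' m)⟩
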